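/- Let (X,G) be a minimal dynamical system and π : X → Y an equicontinuous factor such that some fiber π^{-1}(y) is a singleton. Then (Y,G) is the maximal equicontinuous factor of (X,G). -/

import Mathlib

/-- If (Y,G) is an equicontinuous factor of a minimal system (X,G)
and some fiber of the factor map is a singleton, then (Y,G) is the maximal
equicontinuous factor: every equicontinuous factor of (X,G) factors through it. -/
theorem equicontinuous_factor_with_singleton_fiber_is_maximal
    {G : Type} [AddCommGroup G]
    {X Y : Type} [MetricSpace X] [CompactSpace X] [MetricSpace Y] [CompactSpace Y]
    (φ : G → X → X)
    (hφc : ∀ t, Continuous (φ t)) (hφ0 : ∀ x, φ 0 x = x)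
    (hφadd : ∀ s t x, φ (s + t) x = φ s (φ t x))
    (hmin : ∀ x : X, Dense (Set.range fun t => φ t x))
    (ψ : G → Y → Y)
    (hψc : ∀ t, Continuous (ψ t)) (hψ0 : ∀ y, ψ 0 y = y)
    (hψadd : ∀ s t y, ψ (s + t) y = ψ s (ψ t y))
    (hψequi : ∀ ε > (0:ℝ), ∃ δ > (0:ℝ), ∀ y y' : Y, dist y y' < δ →
        ∀ t, dist (ψ t y) (ψ t y') < ε)
    (π : X → Y) (hπc : Continuous π) (hπs : Function.Surjective π)
    (hπeq : ∀ t x, π (φ t x) = ψ t (π x))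
    (y₀ : Y) (hfiber : ∃! x : X, π x = y₀) :
    ∀ (Z : Type) [MetricSpace Z] [CompactSpace Z] (ρ : G → Z → Z),
      (∀ t, Continuous (ρ t)) → (∀ z, ρ 0 z = z) →
      (∀ s t z, ρ (s + t) z = ρ s (ρ t z)) →
      (∀ ε > (0:ℝ), ∃ δ > (0:ℝ), ∀ z z' : Z, dist z z' < δ →
        ∀ t, dist (ρ t z) (ρ t z') < ε) →
      ∀ σ : X → Z, Continuous σ → Function.Surjective σ →
        (∀ t x, σ (φ t x) = ρ t (σ x)) →
        ∃ q : Y → Z, Continuous q ∧ Function.Surjective q ∧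
          (∀ t y, q (ψ t y) = ρ t (q y)) ∧ ∀ x, q (π x) = σ x := by
  intro Z _ _ ρ hρc hρ0 hρadd hρequi σ hσc hσs hσeq
  obtain ⟨x₀, hx₀, hx₀uniq⟩ := hfiber
  -- key: σ is constant on fibers of π
  have key : ∀ x x' : X, π x = π x' → σ x = σ x' := by
    intro x x' hxx'
    -- choose t n with φ (t n) x → x₀
    have hdr : DenseRange (fun t => φ t x) := hmin x
    have ht : ∀ n : ℕ, ∃ t : G, dist (φ t x) x₀ < 1 / (n + 1) := by
      intro n
      obtain ⟨s, hs⟩ := (Metric.denseRange_iff.1 hdr) x₀ (1 / (n + 1)) (by positivity)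
      exact ⟨s, by rwa [dist_comm]⟩
    choose t ht using ht
    have htend : Filter.Tendsto (fun n => φ (t n) x) Filter.atTop (nhds x₀) := by
      rw [Metric.tendsto_atTop]
      intro ε hε
      obtain ⟨N, hN⟩ := exists_nat_one_div_lt hε
      refine ⟨N, fun n hn => lt_of_lt_of_le (ht n) ?_⟩
      have : (1 : ℝ) / (n + 1) ≤ 1 / (N + 1) := by
        apply one_div_le_one_div_of_le (by positivity)
        exact_mod_cast Nat.succ_le_succ hn
      exact this.trans hN.le
    -- subsequence of φ (t n) x' converging to some a
    obtain ⟨a, k, hk, hka⟩ := CompactSpace.tendsto_subseq (fun n => φ (t n) x')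
    -- π a = y₀ hence a = x₀
    have hπa : π a = y₀ := by
      have h1 : Filter.Tendsto (fun m => π (φ (t (k m)) x')) Filter.atTop (nhds (π a)) :=
        (hπc.continuousAt.tendsto.comp hka)
      have h2 : Filter.Tendsto (fun m => π (φ (t (k m)) x')) Filter.atTop (nhds y₀) := by
        have : (fun m => π (φ (t (k m)) x')) = fun m => π (φ (t (k m)) x) := by
          funext m; rw [hπeq, hπeq, hxx']
        rw [this]
        have := (hπc.continuousAt.tendsto.comp (htend.comp hk.tendsto_atTop))
        rwa [hx₀] at this
      exact tendsto_nhds_unique h1 h2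
    have ha : a = x₀ := hx₀uniq a hπa
    -- dist (ρ (t (k m)) (σ x)) (ρ (t (k m)) (σ x')) → 0
    have hd : Filter.Tendsto
        (fun m => dist (ρ (t (k m)) (σ x)) (ρ (t (k m)) (σ x'))) Filter.atTop (nhds 0) := by
      have e : ∀ m, dist (ρ (t (k m)) (σ x)) (ρ (t (k m)) (σ x'))
          = dist (σ (φ (t (k m)) x)) (σ (φ (t (k m)) x')) := by
        intro m; rw [hσeq, hσeq]
      simp only [e]
      have h1 : Filter.Tendsto (fun m => σ (φ (t (k m)) x)) Filter.atTop (nhds (σ x₀)) :=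
        hσc.continuousAt.tendsto.comp (htend.comp hk.tendsto_atTop)
      have h2 : Filter.Tendsto (fun m => σ (φ (t (k m)) x')) Filter.atTop (nhds (σ x₀)) := by
        have := hσc.continuousAt.tendsto.comp hka
        rwa [ha] at this
      have := (h1.dist h2)
      simpa using this
    -- conclude σ x = σ x'
    have hdd : ∀ ε > (0:ℝ), dist (σ x) (σ x') < ε := by
      intro ε hε
      obtain ⟨δ, hδ, hδε⟩ := hρequi ε hε
      obtain ⟨m, hm⟩ :=
        ((Metric.tendsto_atTop.1 hd) δ hδ).imp (fun m h => h m le_rfl)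
      rw [Real.dist_eq, sub_zero, abs_of_nonneg dist_nonneg] at hm
      have := hδε _ _ hm (-(t (k m)))
      have ez : ∀ z : Z, ρ (-(t (k m))) (ρ (t (k m)) z) = z := by
        intro z
        rw [← hρadd, neg_add_cancel, hρ0]
      rwa [ez, ez] at this
    by_contra hne
    have : dist (σ x) (σ x') > 0 := dist_pos.2 hne
    exact absurd (hdd _ this) (lt_irrefl _)
  -- define q
  have hqm : Topology.IsQuotientMap π := Topology.IsQuotientMap.of_surjective_continuous hπs hπc
  classical
  refine ⟨fun y => σ (hπs y).choose, ?_, ?_, ?_, ?_⟩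
  · rw [hqm.continuous_iff]
    have : (fun y => σ (hπs y).choose) ∘ π = σ := by
      funext x
      exact key _ _ (hπs (π x)).choose_spec
    rw [this]; exact hσc
  · intro z
    obtain ⟨x, hx⟩ := hσs z
    exact ⟨π x, (key _ _ (hπs (π x)).choose_spec).trans hx⟩
  · intro s y
    have h1 : π (hπs (ψ s y)).choose = ψ s y := (hπs (ψ s y)).choose_spec
    have h2 : π (φ s (hπs y).choose) = ψ s y := by rw [hπeq, (hπs y).choose_spec]
    calc σ (hπs (ψ s y)).choose = σ (φ s (hπs y).choose) := key _ _ (by rw [h1, h2])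
      _ = ρ s (σ (hπs y).choose) := hσeq _ _
  · intro x
    exact key _ _ (hπs (π x)).choose_spec
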